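/- For every finite simple graph G, G has an LD-code and the LD-number of G is at most the L-number of G plus one, i.e., γ^LD(G) ≤ γ^L(G) + 1. -/

import Mathlib

open Finset

namespace SepDom

variable {V : Type*} [Fintype V] [DecidableEq V]

/-- The closed neighborhood `N[v]` of a vertex as a `Finset`. -/
def closedNbhd (G : SimpleGraph V) [DecidableRel G.Adj] (v : V) : Finset V :=
  insert v (G.neighborFinset v)

/-- `C` is a dominating set: `N[v] ∩ C ≠ ∅` for all `v`. -/
def IsDomSet (G : SimpleGraph V) [DecidableRel G.Adj] (C : Finset V) : Prop :=
  ∀ v : V, (closedNbhd G v ∩ C).Nonempty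

/-- `C` is a total-dominating set: `N(v) ∩ C ≠ ∅` for all `v`. -/
def IsTotalDomSet (G : SimpleGraph V) [DecidableRel G.Adj] (C : Finset V) : Prop :=
  ∀ v : V, (G.neighborFinset v ∩ C).Nonempty

/-- `C` is a locating set (L-set): the sets `N(v) ∩ C`, `v ∉ C`, are pairwise distinct. -/
def IsLSet (G : SimpleGraph V) [DecidableRel G.Adj] (C : Finset V) : Prop :=
  ∀ u ∉ C, ∀ v ∉ C, G.neighborFinset u ∩ C = G.neighborFinset v ∩ C → u = v

/-- `C` is an open-separating set (O-set): the sets `N(v) ∩ C` are pairwise distinct. -/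
def IsOSet (G : SimpleGraph V) [DecidableRel G.Adj] (C : Finset V) : Prop :=
  ∀ u v : V, G.neighborFinset u ∩ C = G.neighborFinset v ∩ C → u = v

/-- `C` is a closed-separating set (I-set): the sets `N[v] ∩ C` are pairwise distinct. -/
def IsISet (G : SimpleGraph V) [DecidableRel G.Adj] (C : Finset V) : Prop :=
  ∀ u v : V, closedNbhd G u ∩ C = closedNbhd G v ∩ C → u = v

/-- `C` is a full-separating set (F-set): both open- and closed-separating. -/
def IsFSet (G : SimpleGraph V) [DecidableRel G.Adj] (C : Finset V) : Prop :=
  IsOSet G C ∧ IsISet G C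

/-- `G` has open twins: distinct non-adjacent vertices with equal open neighborhoods. -/
def HasOpenTwins (G : SimpleGraph V) [DecidableRel G.Adj] : Prop :=
  ∃ u v : V, u ≠ v ∧ ¬ G.Adj u v ∧ G.neighborFinset u = G.neighborFinset v

/-- `G` has closed twins: distinct adjacent vertices with equal closed neighborhoods. -/
def HasClosedTwins (G : SimpleGraph V) [DecidableRel G.Adj] : Prop :=
  ∃ u v : V, u ≠ v ∧ G.Adj u v ∧ closedNbhd G u = closedNbhd G v

/-- `G` has an isolated vertex: a vertex with empty open neighborhood. -/
def HasIsolated (G : SimpleGraph V) [DecidableRel G.Adj] : Prop :=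
  ∃ v : V, G.neighborFinset v = ∅

/-- The L-number: minimum cardinality of an L-set. -/
noncomputable def lNum (G : SimpleGraph V) [DecidableRel G.Adj] : ℕ :=
  sInf {n | ∃ C : Finset V, IsLSet G C ∧ C.card = n}

/-- The O-number: minimum cardinality of an O-set. -/
noncomputable def oNum (G : SimpleGraph V) [DecidableRel G.Adj] : ℕ :=
  sInf {n | ∃ C : Finset V, IsOSet G C ∧ C.card = n}

/-- The I-number: minimum cardinality of an I-set. -/
noncomputable def iNum (G : SimpleGraph V) [DecidableRel G.Adj] : ℕ :=
  sInf {n | ∃ C : Finset V, IsISet G C ∧ C.card = n}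

/-- The F-number: minimum cardinality of an F-set. -/
noncomputable def fNum (G : SimpleGraph V) [DecidableRel G.Adj] : ℕ :=
  sInf {n | ∃ C : Finset V, IsFSet G C ∧ C.card = n}

/-- The LD-number: minimum cardinality of an LD-code. -/
noncomputable def ldNum (G : SimpleGraph V) [DecidableRel G.Adj] : ℕ :=
  sInf {n | ∃ C : Finset V, IsDomSet G C ∧ IsLSet G C ∧ C.card = n}

/-- The OD-number: minimum cardinality of an OD-code. -/
noncomputable def odNum (G : SimpleGraph V) [DecidableRel G.Adj] : ℕ :=
  sInf {n | ∃ C : Finset V, IsDomSet G C ∧ IsOSet G C ∧ C.card = n}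

/-- The ID-number: minimum cardinality of an ID-code. -/
noncomputable def idNum (G : SimpleGraph V) [DecidableRel G.Adj] : ℕ :=
  sInf {n | ∃ C : Finset V, IsDomSet G C ∧ IsISet G C ∧ C.card = n}

/-- The FD-number: minimum cardinality of an FD-code. -/
noncomputable def fdNum (G : SimpleGraph V) [DecidableRel G.Adj] : ℕ :=
  sInf {n | ∃ C : Finset V, IsDomSet G C ∧ IsFSet G C ∧ C.card = n}

/-- The LTD-number: minimum cardinality of an LTD-code. -/
noncomputable def ltdNum (G : SimpleGraph V) [DecidableRel G.Adj] : ℕ :=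
  sInf {n | ∃ C : Finset V, IsTotalDomSet G C ∧ IsLSet G C ∧ C.card = n}

/-- The OTD-number: minimum cardinality of an OTD-code. -/
noncomputable def otdNum (G : SimpleGraph V) [DecidableRel G.Adj] : ℕ :=
  sInf {n | ∃ C : Finset V, IsTotalDomSet G C ∧ IsOSet G C ∧ C.card = n}

/-- The ITD-number: minimum cardinality of an ITD-code. -/
noncomputable def itdNum (G : SimpleGraph V) [DecidableRel G.Adj] : ℕ :=
  sInf {n | ∃ C : Finset V, IsTotalDomSet G C ∧ IsISet G C ∧ C.card = n}

/-- The FTD-number: minimum cardinality of an FTD-code. -/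
noncomputable def ftdNum (G : SimpleGraph V) [DecidableRel G.Adj] : ℕ :=
  sInf {n | ∃ C : Finset V, IsTotalDomSet G C ∧ IsFSet G C ∧ C.card = n}

end SepDom

open SepDom

theorem ld_le_l_add_one {V : Type*} [Fintype V] [DecidableEq V]
    (G : SimpleGraph V) [DecidableRel G.Adj] :
    (∃ C : Finset V, IsDomSet G C ∧ IsLSet G C) ∧ ldNum G ≤ lNum G + 1 := by
  have key : ∀ C : Finset V, IsLSet G C →
      ∃ C' : Finset V, IsDomSet G C' ∧ IsLSet G C' ∧ C'.card ≤ C.card + 1 := by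
    intro C hC
    by_cases h : ∀ v : V, (closedNbhd G v ∩ C).Nonempty
    · exact ⟨C, h, hC, Nat.le_succ _⟩
    · push_neg at h
      obtain ⟨w, hw⟩ := h
      have hwC : w ∉ C := by
        intro hwc
        have : w ∈ closedNbhd G w ∩ C :=
          Finset.mem_inter.mpr ⟨Finset.mem_insert_self _ _, hwc⟩
        simp [hw] at this
      have hwN : G.neighborFinset w ∩ C = ∅ := by
        have hsub : G.neighborFinset w ∩ C ⊆ closedNbhd G w ∩ C :=
          Finset.inter_subset_inter (Finset.subset_insert _ _) le_rfl
        rw [hw] at hsub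
        exact Finset.subset_empty.mp hsub
      have hrestrict : ∀ u : V, G.neighborFinset u ∩ insert w C ∩ C
          = G.neighborFinset u ∩ C := by
        intro u
        rw [Finset.inter_assoc, Finset.inter_eq_right.mpr (Finset.subset_insert _ _)]
      refine ⟨insert w C, ?_, ?_, Finset.card_insert_le _ _⟩
      · intro v
        by_cases hv : (closedNbhd G v ∩ C).Nonempty
        · exact hv.mono (Finset.inter_subset_inter le_rfl (Finset.subset_insert _ _))
        · rw [Finset.not_nonempty_iff_eq_empty] at hv
          have hvC : v ∉ C := by
            intro hvc
            have : v ∈ closedNbhd G v ∩ C :=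
              Finset.mem_inter.mpr ⟨Finset.mem_insert_self _ _, hvc⟩
            simp [hv] at this
          have hvN : G.neighborFinset v ∩ C = ∅ := by
            have hsub : G.neighborFinset v ∩ C ⊆ closedNbhd G v ∩ C :=
              Finset.inter_subset_inter (Finset.subset_insert _ _) le_rfl
            rw [hv] at hsub
            exact Finset.subset_empty.mp hsub
          have hvw : v = w := hC v hvC w hwC (by rw [hvN, hwN])
          exact ⟨v, Finset.mem_inter.mpr ⟨Finset.mem_insert_self _ _,
            hvw ▸ Finset.mem_insert_self _ _⟩⟩
      · intro u hu v hv heq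
        have huC : u ∉ C := fun h => hu (Finset.mem_insert_of_mem h)
        have hvC : v ∉ C := fun h => hv (Finset.mem_insert_of_mem h)
        have : G.neighborFinset u ∩ C = G.neighborFinset v ∩ C := by
          rw [← hrestrict u, ← hrestrict v, heq]
        exact hC u huC v hvC this
  have hLuniv : IsLSet G (Finset.univ : Finset V) := by
    intro u hu
    exact absurd (Finset.mem_univ u) hu
  have hne : {n | ∃ C : Finset V, IsLSet G C ∧ C.card = n}.Nonempty :=
    ⟨_, Finset.univ, hLuniv, rfl⟩
  obtain ⟨C, hCL, hCcard⟩ := Nat.sInf_mem hne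
  obtain ⟨C', hC'D, hC'L, hC'card⟩ := key C hCL
  constructor
  · exact ⟨C', hC'D, hC'L⟩
  · calc ldNum G ≤ C'.card := Nat.sInf_le ⟨C', hC'D, hC'L, rfl⟩
      _ ≤ C.card + 1 := hC'card
      _ = lNum G + 1 := by rw [hCcard, lNum]
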